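/- Let R be a finite field equipped with the discrete topology, Γ a set with at least two elements, φ: Γ → Γ a map, and w ∈ R^Γ a weight vector. If the dynamical system (R^Γ, σ_{φ,w}) has at least one scrambled pair, then there exists a non-quasi-periodic point θ ∈ Γ of φ such that w_{φ^n(θ)} ≠ 0 for all n ≥ 0. -/

import Mathlib

open Function Set

namespace WGShift

variable {Γ R : Type*}

/-- The basic entourage `O_M` determined by a set of coordinates `M ⊆ Γ`. -/
def shiftOM (M : Set Γ) : Set ((Γ → R) × (Γ → R)) :=
  {p | ∀ α ∈ M, p.1 α = p.2 α}

/-- Entourages of the product uniformity on `Γ → R` (with `R` discrete):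
exactly the sets containing some `O_M` with `M` finite. -/
def IsEntourage (O : Set ((Γ → R) × (Γ → R))) : Prop :=
  ∃ M : Set Γ, M.Finite ∧ shiftOM M ⊆ O

/-- The weighted generalized shift `σ_{φ,w}`. -/
def wshift [Mul R] (φ : Γ → Γ) (w : Γ → R) : (Γ → R) → (Γ → R) :=
  fun x α => w α * x (φ α)

/-- `α` is quasi-periodic under `φ` if `φ^i α = φ^j α` for some `i > j ≥ 1`. -/
def IsQuasiPeriodic (φ : Γ → Γ) (α : Γ) : Prop :=
  ∃ i j : ℕ, 1 ≤ j ∧ j < i ∧ φ^[i] α = φ^[j] α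

/-- Sensitivity of `(R^Γ, f)` with respect to the product uniformity. -/
def Sensitive [TopologicalSpace R] (f : (Γ → R) → (Γ → R)) : Prop :=
  ∃ O : Set ((Γ → R) × (Γ → R)), IsEntourage O ∧
    ∀ x : Γ → R, ∀ U : Set (Γ → R), IsOpen U → x ∈ U →
      ∃ y ∈ U, ∃ n : ℕ, (f^[n] x, f^[n] y) ∉ O

/-- Strong sensitivity of `(R^Γ, f)` with respect to the product uniformity. -/
def StronglySensitive [TopologicalSpace R] (f : (Γ → R) → (Γ → R)) : Prop :=
  ∃ O : Set ((Γ → R) × (Γ → R)), IsEntourage O ∧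
    ∀ x : Γ → R, ∀ U : Set (Γ → R), IsOpen U → x ∈ U →
      ∃ y ∈ U, ∃ N : ℕ, ∀ n ≥ N, (f^[n] x, f^[n] y) ∉ O

/-- `x, y` are proximal for `f`. -/
def ProximalPair (f : (Γ → R) → (Γ → R)) (x y : Γ → R) : Prop :=
  ∀ O : Set ((Γ → R) × (Γ → R)), IsEntourage O →
    ∃ n ≥ 1, (f^[n] x, f^[n] y) ∈ O

/-- `x, y` are asymptotic for `f`. -/
def AsymptoticPair (f : (Γ → R) → (Γ → R)) (x y : Γ → R) : Prop :=
  ∀ O : Set ((Γ → R) × (Γ → R)), IsEntourage O →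
    ∃ N ≥ 1, ∀ n ≥ N, (f^[n] x, f^[n] y) ∈ O

/-- A scrambled pair: proximal but not asymptotic. -/
def ScrambledPair (f : (Γ → R) → (Γ → R)) (x y : Γ → R) : Prop :=
  ProximalPair f x y ∧ ¬ AsymptoticPair f x y

/-- Li–Yorke chaos: existence of an uncountable scrambled set. -/
def LiYorkeChaotic (f : (Γ → R) → (Γ → R)) : Prop :=
  ∃ A : Set (Γ → R), ¬ A.Countable ∧
    ∀ x ∈ A, ∀ y ∈ A, x ≠ y → ScrambledPair f x y

/-- Topological transitivity of `(R^Γ, f)`. -/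
def TopTransitive [TopologicalSpace R] (f : (Γ → R) → (Γ → R)) : Prop :=
  ∀ U V : Set (Γ → R), IsOpen U → IsOpen V → U.Nonempty → V.Nonempty →
    ∃ n ≥ 1, (f^[n] '' U ∩ V).Nonempty

/-- The set of periodic points of `f`. -/
def perPoints (f : (Γ → R) → (Γ → R)) : Set (Γ → R) :=
  {x | ∃ n ≥ 1, f^[n] x = x}

/-- Devaney chaos: sensitive, topologically transitive, dense periodic points. -/
def DevaneyChaotic [TopologicalSpace R] (f : (Γ → R) → (Γ → R)) : Prop :=
  Sensitive f ∧ TopTransitive f ∧ Dense (perPoints f)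

open Classical in
/-- The point `x^A ∈ R^Γ` built from `A ⊆ ℕ` along the orbit of `ν`. -/
noncomputable def xA [Zero R] [One R] (φ : Γ → Γ) (ν : Γ) (A : Set ℕ) : Γ → R :=
  fun α => if ∃ p : ℕ, p ∈ A ∧ α = φ^[p * (p + 1) / 2] ν then 1 else 0

end WGShift

open WGShift


open Finset in
lemma wshift_iter {Γ R : Type*} [CommRing R] (φ : Γ → Γ) (w : Γ → R) :
    ∀ (n : ℕ) (x : Γ → R) (α : Γ),
      (wshift φ w)^[n] x α = (∏ k ∈ Finset.range n, w (φ^[k] α)) * x (φ^[n] α) := by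
  intro n
  induction n with
  | zero => intro x α; simp
  | succ n ih =>
      intro x α
      rw [Function.iterate_succ_apply, ih, Finset.prod_range_succ,
        Function.iterate_succ_apply']
      simp only [wshift]
      ring

theorem stmt11 {R Γ : Type*} [Field R] [Fintype R]
    [TopologicalSpace R] [DiscreteTopology R] [Nontrivial Γ]
    (φ : Γ → Γ) (w : Γ → R)
    (h : ∃ x y : Γ → R, ScrambledPair (wshift φ w) x y) :
    ∃ θ : Γ, ¬ IsQuasiPeriodic φ θ ∧ ∀ n : ℕ, w (φ^[n] θ) ≠ 0 := by
  obtain ⟨x, y, hprox, hnasym⟩ := h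
  rw [AsymptoticPair] at hnasym
  push_neg at hnasym
  obtain ⟨O, hO, hOn⟩ := hnasym
  obtain ⟨M, hMfin, hMO⟩ := hO
  set S : Γ → Set ℕ := fun α =>
    {n | (wshift φ w)^[n] x α ≠ (wshift φ w)^[n] y α} with hS
  have hpig : ∃ α ∈ M, (S α).Infinite := by
    by_contra hc
    push_neg at hc
    have hT : (⋃ α ∈ M, S α).Finite :=
      hMfin.biUnion fun α hα => hc α hα
    obtain ⟨b, hb⟩ := hT.bddAbove
    obtain ⟨n, hn, hnO⟩ := hOn (b + 1) (by omega)
    have hns : ((wshift φ w)^[n] x, (wshift φ w)^[n] y) ∉ shiftOM M :=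
      fun hmem => hnO (hMO hmem)
    simp only [shiftOM, Set.mem_setOf_eq] at hns
    push_neg at hns
    obtain ⟨α, hαM, hαne⟩ := hns
    have hmem : n ∈ ⋃ α ∈ M, S α := Set.mem_biUnion hαM hαne
    have := hb hmem
    omega
  obtain ⟨α, hαM, hSinf⟩ := hpig
  have hw : ∀ k : ℕ, w (φ^[k] α) ≠ 0 := by
    intro k
    obtain ⟨n, hnS, hkn⟩ := hSinf.exists_gt k
    have hne : (wshift φ w)^[n] x α ≠ (wshift φ w)^[n] y α := hnS
    have hprod : (∏ l ∈ Finset.range n, w (φ^[l] α)) ≠ 0 := by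
      intro h0
      exact hne (by rw [wshift_iter, wshift_iter, h0, zero_mul, zero_mul])
    exact Finset.prod_ne_zero_iff.mp hprod k (Finset.mem_range.mpr hkn)
  refine ⟨α, ?_, hw⟩
  rintro ⟨i, j, hj1, hji, heq⟩
  set p := i - j with hp
  have hp0 : 0 < p := by omega
  have hper : ∀ n, j ≤ n → φ^[n + p] α = φ^[n] α := by
    intro n hn
    obtain ⟨t, rfl⟩ : ∃ t, n = j + t := ⟨n - j, by omega⟩
    have h1 : j + t + p = t + i := by omega
    rw [h1, Function.iterate_add_apply, heq, ← Function.iterate_add_apply]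
    congr 1
    omega
  have hperk : ∀ k n, j ≤ n → φ^[n + k * p] α = φ^[n] α := by
    intro k
    induction k with
    | zero => simp
    | succ k ih =>
        intro n hn
        have h1 : n + (k + 1) * p = n + p + k * p := by ring
        rw [h1, ih _ (by omega), hper n hn]
  have hcong : ∀ a b, j ≤ a → j ≤ b → a % p = b % p → φ^[a] α = φ^[b] α := by
    have key : ∀ a b, j ≤ a → a ≤ b → a % p = b % p → φ^[a] α = φ^[b] α := by
      intro a b ha hab hmod
      obtain ⟨k, hk⟩ : p ∣ b - a := (Nat.modEq_iff_dvd' hab).mp hmod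
      have hmc : p * k = k * p := Nat.mul_comm p k
      have hb' : b = a + k * p := by omega
      rw [hb', hperk k a ha]
    intro a b ha hb hmod
    rcases le_total a b with hle | hle
    · exact key a b ha hle hmod
    · exact (key b a hb hle hmod.symm).symm
  obtain ⟨m, hm1, hmO⟩ := hprox (shiftOM ((fun t => φ^[t] α) '' Set.Icc j (j + p - 1)))
    ⟨_, (Set.finite_Icc _ _).image _, subset_rfl⟩
  obtain ⟨n0, hn0S, hn0⟩ := hSinf.exists_gt (m + j)
  set s := n0 - m with hsdef
  have hsj : j ≤ s := by omega
  set t := j + (s - j) % p with htdef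
  have htmem : t ∈ Set.Icc j (j + p - 1) := by
    constructor
    · omega
    · have := Nat.mod_lt (s - j) hp0
      omega
  have hγ : (φ^[t] α) ∈ (fun t => φ^[t] α) '' Set.Icc j (j + p - 1) :=
    Set.mem_image_of_mem _ htmem
  have heqc : (wshift φ w)^[m] x (φ^[t] α) = (wshift φ w)^[m] y (φ^[t] α) :=
    hmO _ hγ
  have hmt : φ^[m + t] α = φ^[n0] α := by
    apply hcong
    · omega
    · omega
    · have h1 : (s - j) % p ≡ s - j [MOD p] := Nat.mod_modEq _ _
      have h2 : m + t ≡ m + j + (s - j) [MOD p] := by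
        have := (Nat.ModEq.add_left (m + j) h1)
        simpa [htdef, Nat.add_assoc] using this
      have h3 : m + j + (s - j) = n0 := by omega
      rw [h3] at h2
      exact h2
  have hiter : ∀ z : Γ → R, (wshift φ w)^[m] z (φ^[t] α) =
      (∏ k ∈ Finset.range m, w (φ^[k + t] α)) * z (φ^[n0] α) := by
    intro z
    rw [wshift_iter, ← Function.iterate_add_apply, hmt]
    congr 1
    apply Finset.prod_congr rfl
    intro k _
    rw [← Function.iterate_add_apply]
  have hc0 : (∏ k ∈ Finset.range m, w (φ^[k + t] α)) ≠ 0 := by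
    rw [Finset.prod_ne_zero_iff]
    intro k _
    exact hw (k + t)
  have hxy : x (φ^[n0] α) = y (φ^[n0] α) := by
    apply mul_left_cancel₀ hc0
    rw [← hiter, ← hiter, heqc]
  have hn0ne : (wshift φ w)^[n0] x α ≠ (wshift φ w)^[n0] y α := hn0S
  exact hn0ne (by rw [wshift_iter, wshift_iter, hxy])
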